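/- Let W_h^0 be the space of edge-based piecewise constant functions on a conforming polygonal partition of Ω vanishing on ∂Ω. Suppose v_b ∈ W_h^0 satisfies: on every element T, the weak gradient ∇_w v_b = 0 and v_b(e_i) = s(v_b)(M_i) for every edge e_i of T (where s(v_b) is the affine extension). Then v_b ≡ 0. -/
import Mathlib


/-- dot product on ℝ² -/
noncomputable def dot2 (a b : ℝ × ℝ) : ℝ := a.1 * b.1 + a.2 * b.2

/-- If `v_b ∈ W_h^0` (single-valued on edges, zero on boundary edges) has
vanishing weak gradient on every element and matches its affine extension
`s(v_b) = aco t + g t · x` at all edge midpoints, then (using the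
divergence/midpoint identity and the connectivity of the partition)
`v_b ≡ 0`. -/
theorem stmt11 {ι ε : Type*} [Fintype ι] [Fintype ε]
    (edges : ι → Finset ε) (Bdry : Finset ε)
    (hcover : ∀ e : ε, e ∈ Bdry ∨ ∃ t, e ∈ edges t)
    (mid : ε → ℝ × ℝ) (len : ι → ε → ℝ) (hlen : ∀ t, ∀ e ∈ edges t, 0 < len t e)
    (nrm : ι → ε → ℝ × ℝ)
    (area : ι → ℝ) (harea : ∀ t, 0 < area t)
    (v : ε → ℝ) (hv0 : ∀ e ∈ Bdry, v e = 0)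
    (aco : ι → ℝ) (g : ι → ℝ × ℝ)
    (hmatch : ∀ t, ∀ e ∈ edges t, v e = aco t + dot2 (g t) (mid e))
    (hdivid : ∀ t, area t • g t
        = ∑ e ∈ edges t, (aco t + dot2 (g t) (mid e)) • (len t e • nrm t e))
    (hwg : ∀ t, ∑ e ∈ edges t, v e • (len t e • nrm t e) = (0 : ℝ × ℝ))
    (hconn : ∀ c : ι → ℝ,
        (∀ t t' : ι, (∃ e, e ∈ edges t ∧ e ∈ edges t') → c t = c t') →
        (∀ t : ι, (∃ e ∈ edges t, e ∈ Bdry) → c t = 0) → ∀ t, c t = 0) :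
    ∀ e, v e = 0 := by
  have hg : ∀ t, g t = 0 := by
    intro t
    have h := hdivid t
    rw [Finset.sum_congr rfl (fun e he => by rw [← hmatch t e he]), hwg t] at h
    have := (smul_eq_zero.mp h).resolve_left (ne_of_gt (harea t))
    exact this
  have hveq : ∀ t, ∀ e ∈ edges t, v e = aco t := by
    intro t e he
    rw [hmatch t e he, hg t]
    simp [dot2]
  have haco : ∀ t, aco t = 0 := by
    apply hconn
    · rintro t t' ⟨e, he, he'⟩
      rw [← hveq t e he, hveq t' e he']
    · rintro t ⟨e, he, heB⟩
      rw [← hveq t e he, hv0 e heB]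
  intro e
  rcases hcover e with h | ⟨t, ht⟩
  · exact hv0 e h
  · rw [hveq t e ht, haco t]
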